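/- Let q ≥ 2 and w ≥ 1 be integers with w < (q^2−1)/(q+2). Then q^(w+1) · C(q+1, w+1) / C(q^2+q+1, w+1) < exp(−w^2/(2q+2)), where C(n, k) denotes the binomial coefficient. -/

import Mathlib

open Finset

set_option maxHeartbeats 800000 in
theorem pi_estimate (q w : ℕ) (hq : 2 ≤ q) (hw : 1 ≤ w)
    (hwq : (w : ℝ) < ((q : ℝ) ^ 2 - 1) / ((q : ℝ) + 2)) :
    ((q ^ (w + 1) * (q + 1).choose (w + 1) : ℕ) : ℝ) / (((q ^ 2 + q + 1).choose (w + 1) : ℕ) : ℝ)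
      < Real.exp (-(w : ℝ) ^ 2 / (2 * q + 2)) := by
  have hq2 : (0:ℝ) < (q:ℝ) + 2 := by positivity
  have hwq' : (w:ℝ) * ((q:ℝ)+2) < (q:ℝ)^2 - 1 := (lt_div_iff₀ hq2).mp hwq
  have hqR : (2:ℝ) ≤ (q:ℝ) := by exact_mod_cast hq
  have hwR : (1:ℝ) ≤ (w:ℝ) := by exact_mod_cast hw
  have hwq_nat : w < q := by
    by_contra h
    push_neg at h
    have : (q:ℝ) ≤ (w:ℝ) := by exact_mod_cast h
    nlinarith
  have hwqR : (w:ℝ) < (q:ℝ) := by exact_mod_cast hwq_nat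
  have hiw : ∀ i ∈ range (w+1), (i:ℝ) ≤ (w:ℝ) := by
    intro i hi
    have := Nat.lt_succ_iff.mp (mem_range.mp hi)
    exact_mod_cast this
  have hden : ∀ i ∈ range (w+1), (0:ℝ) < (q:ℝ)^2 + (q:ℝ) + 1 - i := by
    intro i hi
    have := hiw i hi
    nlinarith
  have hnum : ∀ i ∈ range (w+1), (0:ℝ) < (q:ℝ) * ((q:ℝ) + 1 - i) := by
    intro i hi
    have := hiw i hi
    nlinarith
  -- descFactorial casts
  have hd1 : (((q+1).descFactorial (w+1) : ℕ) : ℝ) = ∏ i ∈ range (w+1), ((q:ℝ) + 1 - i) := by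
    rw [Nat.descFactorial_eq_prod_range, Nat.cast_prod]
    refine prod_congr rfl fun i hi => ?_
    have h1 : i ≤ q + 1 := by
      have := Nat.lt_succ_iff.mp (mem_range.mp hi); omega
    rw [Nat.cast_sub h1]; push_cast; ring
  have hd2 : (((q^2+q+1).descFactorial (w+1) : ℕ) : ℝ)
      = ∏ i ∈ range (w+1), ((q:ℝ)^2 + (q:ℝ) + 1 - i) := by
    rw [Nat.descFactorial_eq_prod_range, Nat.cast_prod]
    refine prod_congr rfl fun i hi => ?_
    have h1 : i ≤ q^2 + q + 1 := by
      have := Nat.lt_succ_iff.mp (mem_range.mp hi); nlinarith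
    rw [Nat.cast_sub h1]; push_cast; ring
  have hfact : ((Nat.factorial (w+1) : ℕ) : ℝ) ≠ 0 := by
    exact_mod_cast (Nat.factorial_pos (w+1)).ne'
  have hc1 : (((q+1).choose (w+1) : ℕ) : ℝ)
      = (∏ i ∈ range (w+1), ((q:ℝ) + 1 - i)) / ((Nat.factorial (w+1) : ℕ) : ℝ) := by
    rw [eq_div_iff hfact, ← hd1]
    exact_mod_cast ((Nat.mul_comm ((q+1).choose (w+1)) (Nat.factorial (w+1))).trans
      (Nat.descFactorial_eq_factorial_mul_choose (q+1) (w+1)).symm)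
  have hc2 : (((q^2+q+1).choose (w+1) : ℕ) : ℝ)
      = (∏ i ∈ range (w+1), ((q:ℝ)^2 + (q:ℝ) + 1 - i)) / ((Nat.factorial (w+1) : ℕ) : ℝ) := by
    rw [eq_div_iff hfact, ← hd2]
    exact_mod_cast ((Nat.mul_comm ((q^2+q+1).choose (w+1)) (Nat.factorial (w+1))).trans
      (Nat.descFactorial_eq_factorial_mul_choose (q^2+q+1) (w+1)).symm)
  have hP2 : (0:ℝ) < ∏ i ∈ range (w+1), ((q:ℝ)^2 + (q:ℝ) + 1 - i) :=
    prod_pos hden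
  -- the LHS as a product
  have hkey : ((q ^ (w + 1) * (q + 1).choose (w + 1) : ℕ) : ℝ)
        / (((q ^ 2 + q + 1).choose (w + 1) : ℕ) : ℝ)
      = ∏ i ∈ range (w+1),
          ((q:ℝ) * ((q:ℝ) + 1 - i)) / ((q:ℝ)^2 + (q:ℝ) + 1 - i) := by
    push_cast [hc1, hc2]
    rw [prod_div_distrib, prod_mul_distrib, prod_const]
    rw [card_range]
    field_simp
  rw [hkey]
  -- per-factor bound
  set y : ℕ → ℝ := fun i => (1 + ((q:ℝ) - 1) * i) / ((q:ℝ)^2 + (q:ℝ) + 1 - i) with hy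
  have hylt : ∀ i ∈ range (w+1),
      ((q:ℝ) * ((q:ℝ) + 1 - i)) / ((q:ℝ)^2 + (q:ℝ) + 1 - i) < Real.exp (-(y i)) := by
    intro i hi
    have hd := hden i hi
    have hypos : 0 < y i := by
      apply div_pos _ hd
      have : (0:ℝ) ≤ (i:ℝ) := by positivity
      nlinarith
    have heq : ((q:ℝ) * ((q:ℝ) + 1 - i)) / ((q:ℝ)^2 + (q:ℝ) + 1 - i) = 1 - y i := by
      rw [hy]
      show _ = 1 - (1 + ((q:ℝ) - 1) * i) / ((q:ℝ)^2 + (q:ℝ) + 1 - i)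
      rw [eq_sub_iff_add_eq, ← add_div, div_eq_one_iff_eq hd.ne']
      ring
    rw [heq]
    have := Real.add_one_lt_exp (x := -(y i)) (by linarith [hypos] : -(y i) ≠ 0)
    linarith
  have hpos : ∀ i ∈ range (w+1),
      (0:ℝ) < ((q:ℝ) * ((q:ℝ) + 1 - i)) / ((q:ℝ)^2 + (q:ℝ) + 1 - i) := by
    intro i hi
    exact div_pos (hnum i hi) (hden i hi)
  calc ∏ i ∈ range (w+1), ((q:ℝ) * ((q:ℝ) + 1 - i)) / ((q:ℝ)^2 + (q:ℝ) + 1 - i)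
      < ∏ i ∈ range (w+1), Real.exp (-(y i)) :=
        prod_lt_prod_of_nonempty hpos hylt (nonempty_range_iff.mpr (Nat.succ_ne_zero w))
    _ = Real.exp (∑ i ∈ range (w+1), -(y i)) := (Real.exp_sum _ _).symm
    _ ≤ Real.exp (-(w : ℝ) ^ 2 / (2 * q + 2)) := by
        rw [Real.exp_le_exp]
        rw [Finset.sum_neg_distrib, neg_div, neg_le_neg_iff]
        -- lower bound each y i
        have hyge : ∀ i ∈ range (w+1),
            (1 + ((q:ℝ) - 1) * i) / ((q:ℝ)^2 + (q:ℝ) + 1) ≤ y i := by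
          intro i hi
          simp only [hy]
          have hnn : (0:ℝ) ≤ 1 + ((q:ℝ) - 1) * i := by
            have : (0:ℝ) ≤ (i:ℝ) := by positivity
            nlinarith
          have h1 := hden i hi
          have h2 : (0:ℝ) ≤ (i:ℝ) := by positivity
          gcongr
          linarith
        have hGauss : (∑ i ∈ range (w+1), (i:ℝ)) = (w:ℝ) * ((w:ℝ)+1) / 2 := by
          have := Finset.sum_range_id_mul_two (w+1)
          have hc : ((∑ i ∈ range (w+1), i : ℕ) : ℝ) * 2 = ((w+1) * w : ℕ) := by
            exact_mod_cast congrArg (Nat.cast : ℕ → ℝ) this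
          push_cast at hc
          linarith
        have hsumlow : ((w:ℝ)+1) * (1 + ((q:ℝ) - 1) * (w:ℝ) / 2) / ((q:ℝ)^2 + (q:ℝ) + 1)
            ≤ ∑ i ∈ range (w+1), y i := by
          calc ((w:ℝ)+1) * (1 + ((q:ℝ) - 1) * (w:ℝ) / 2) / ((q:ℝ)^2 + (q:ℝ) + 1)
              = ∑ i ∈ range (w+1), (1 + ((q:ℝ) - 1) * i) / ((q:ℝ)^2 + (q:ℝ) + 1) := by
                rw [← Finset.sum_div, Finset.sum_add_distrib, ← Finset.mul_sum, hGauss,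
                  Finset.sum_const, card_range]
                -- cast done
                ring
            _ ≤ ∑ i ∈ range (w+1), y i := Finset.sum_le_sum hyge
        refine le_trans ?_ hsumlow
        rw [div_le_div_iff₀ (by positivity) (by positivity)]
        nlinarith [mul_lt_mul_of_pos_left hwq' (show (0:ℝ) < (w:ℝ) by linarith), mul_nonneg (show (0:ℝ) ≤ (w:ℝ) by linarith) (show (0:ℝ) ≤ (q:ℝ) by linarith)]
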